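/- Let M > 0, λ ≥ 0, c₀ > 0, δ₁ > 0, δ > 0, and let R be a Kruskal radius function on (−δ, c₀² + δ). Let Ω ⊆ ℝ² be an open set containing [0,c₀] × [0,δ₁) such that every (μ,ν) ∈ Ω has μ·ν ∈ (−δ, c₀² + δ), and let w : ℝ² → ℝ be smooth on Ω and satisfy the λ-mode wave equation in Kruskal coordinates at every (μ,ν) ∈ Ω with μ ≥ 0 and ν ≥ 0. If w(μ,0) = 0 for all μ ∈ [0,c₀] and w(0,ν) = 0 for all ν ∈ [0,δ₁), then w vanishes to infinite order at the segment {ν = 0, 0 ≤ μ ≤ c₀}: for every k ∈ ℕ and every μ ∈ [0,c₀], (∂_ν^k w)(μ,0) = 0. (Key step in the proof of Theorem 5.1.) -/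

import Mathlib

open MeasureTheory Filter Set Function
open scoped ContDiff

/-- A Kruskal radius function on `(−δ, X)`: a smooth positive function `R` with
`e^{R(x)/(2M)}·(R(x) − 2M) = x`, expressing the Schwarzschild radius in terms of the
product `μ·ν` of the Kruskal coordinates. -/
def IsKruskalRadius (M δ X : ℝ) (R : ℝ → ℝ) : Prop :=
  ContDiffOn ℝ ∞ R (Set.Ioo (-δ) X) ∧
  ∀ x ∈ Set.Ioo (-δ) X, 0 < R x ∧ Real.exp (R x/(2*M)) * (R x - 2*M) = x

/-- The λ-mode wave equation in Kruskal coordinates at the point `(μ,ν)`: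
`∂_ν(R(μν)²·∂_μ w) + ∂_μ(R(μν)²·∂_ν w) = (8M²λ²/(R(μν)·e^{R(μν)/(2M)}))·w`. -/
def KruskalEqAt (M lam : ℝ) (R : ℝ → ℝ) (w : ℝ → ℝ → ℝ) (μ ν : ℝ) : Prop :=
  deriv (fun n => (R (μ*n))^2 * deriv (fun m => w m n) μ) ν
    + deriv (fun m => (R (m*ν))^2 * deriv (fun n => w m n) ν) μ
    = (8*M^2*lam^2 / (R (μ*ν) * Real.exp (R (μ*ν)/(2*M)))) * w μ ν


theorem two_le_infty : (2 : WithTop ℕ∞) ≤ ∞ := by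
  have : ((2:ℕ∞) : WithTop ℕ∞) ≤ ((⊤:ℕ∞) : WithTop ℕ∞) := WithTop.coe_le_coe.2 le_top
  simpa using this

noncomputable def pd1 (F : ℝ × ℝ → ℝ) (p : ℝ × ℝ) : ℝ := deriv (fun x => F (x, p.2)) p.1
noncomputable def pd2 (F : ℝ × ℝ → ℝ) (p : ℝ × ℝ) : ℝ := deriv (fun y => F (p.1, y)) p.2

section helpers
variable {E : Type*} [NormedAddCommGroup E] [NormedSpace ℝ E]
variable {Ω : Set (ℝ × ℝ)} {F : ℝ × ℝ → E} {p : ℝ × ℝ}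

theorem slice2_contDiffAt (hΩ : IsOpen Ω) (hF : ContDiffOn ℝ ∞ F Ω) (hp : p ∈ Ω) :
    ContDiffAt ℝ ∞ (fun y => F (p.1, y)) p.2 := by
  have h1 : ContDiffAt ℝ ∞ F p := hF.contDiffAt (hΩ.mem_nhds hp)
  have h2 : ContDiffAt ℝ ∞ (fun y : ℝ => ((p.1, y) : ℝ × ℝ)) p.2 :=
    (contDiff_prodMk_right p.1 : ContDiff ℝ ∞ _).contDiffAt
  exact h1.comp p.2 h2

theorem slice2_diff (hΩ : IsOpen Ω) (hF : ContDiffOn ℝ ∞ F Ω) (hp : p ∈ Ω) :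
    DifferentiableAt ℝ (fun y => F (p.1, y)) p.2 :=
  (slice2_contDiffAt hΩ hF hp).differentiableAt (by norm_num)

theorem slice1_contDiffAt (hΩ : IsOpen Ω) (hF : ContDiffOn ℝ ∞ F Ω) (hp : p ∈ Ω) :
    ContDiffAt ℝ ∞ (fun x => F (x, p.2)) p.1 := by
  have h1 : ContDiffAt ℝ ∞ F p := hF.contDiffAt (hΩ.mem_nhds hp)
  have h2 : ContDiffAt ℝ ∞ (fun x : ℝ => ((x, p.2) : ℝ × ℝ)) p.1 :=
    (contDiff_prodMk_left p.2 : ContDiff ℝ ∞ _).contDiffAt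
  exact h1.comp p.1 h2

theorem slice1_diff (hΩ : IsOpen Ω) (hF : ContDiffOn ℝ ∞ F Ω) (hp : p ∈ Ω) :
    DifferentiableAt ℝ (fun x => F (x, p.2)) p.1 :=
  (slice1_contDiffAt hΩ hF hp).differentiableAt (by norm_num)

theorem slice2_deriv_eq (hΩ : IsOpen Ω) (hF : ContDiffOn ℝ ∞ F Ω) (hp : p ∈ Ω) :
    deriv (fun y => F (p.1, y)) p.2 = fderiv ℝ F p ((0 : ℝ), (1 : ℝ)) := by
  have hd : DifferentiableAt ℝ F p :=
    (hF.contDiffAt (hΩ.mem_nhds hp)).differentiableAt (by norm_num)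
  have hc : HasDerivAt (fun y : ℝ => ((p.1, y) : ℝ × ℝ)) ((0 : ℝ), (1 : ℝ)) p.2 :=
    (hasDerivAt_const p.2 p.1).prodMk (hasDerivAt_id p.2)
  have := (hd.hasFDerivAt.comp_hasDerivAt p.2 hc)
  exact this.deriv

theorem slice1_deriv_eq (hΩ : IsOpen Ω) (hF : ContDiffOn ℝ ∞ F Ω) (hp : p ∈ Ω) :
    deriv (fun x => F (x, p.2)) p.1 = fderiv ℝ F p ((1 : ℝ), (0 : ℝ)) := by
  have hd : DifferentiableAt ℝ F p :=
    (hF.contDiffAt (hΩ.mem_nhds hp)).differentiableAt (by norm_num)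
  have hc : HasDerivAt (fun x : ℝ => ((x, p.2) : ℝ × ℝ)) ((1 : ℝ), (0 : ℝ)) p.1 :=
    (hasDerivAt_id p.1).prodMk (hasDerivAt_const p.1 p.2)
  exact (hd.hasFDerivAt.comp_hasDerivAt p.1 hc).deriv

end helpers

section helpers2
variable {Ω : Set (ℝ × ℝ)} {F G : ℝ × ℝ → ℝ} {p : ℝ × ℝ}

theorem pd2_congr_nhds (h : ∀ᶠ q in nhds p, F q = G q) : pd2 F p = pd2 G p := by
  apply Filter.EventuallyEq.deriv_eq
  have hc : ContinuousAt (fun y : ℝ => ((p.1, y) : ℝ × ℝ)) p.2 :=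
    (continuous_const.prodMk continuous_id).continuousAt
  exact hc (h : {q | F q = G q} ∈ nhds p)

theorem pd1_congr_nhds (h : ∀ᶠ q in nhds p, F q = G q) : pd1 F p = pd1 G p := by
  apply Filter.EventuallyEq.deriv_eq
  have hc : ContinuousAt (fun x : ℝ => ((x, p.2) : ℝ × ℝ)) p.1 :=
    (continuous_id.prodMk continuous_const).continuousAt
  exact hc (h : {q | F q = G q} ∈ nhds p)

theorem pd2_congr (hΩ : IsOpen Ω) (h : ∀ q ∈ Ω, F q = G q) (hp : p ∈ Ω) :
    pd2 F p = pd2 G p :=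
  pd2_congr_nhds (by filter_upwards [hΩ.mem_nhds hp] using h)

theorem pd1_congr (hΩ : IsOpen Ω) (h : ∀ q ∈ Ω, F q = G q) (hp : p ∈ Ω) :
    pd1 F p = pd1 G p :=
  pd1_congr_nhds (by filter_upwards [hΩ.mem_nhds hp] using h)

theorem contDiffOn_pd2 (hΩ : IsOpen Ω) (hF : ContDiffOn ℝ ∞ F Ω) :
    ContDiffOn ℝ ∞ (pd2 F) Ω := by
  have hG : ContDiffOn ℝ ∞ (fderiv ℝ F) Ω := hF.fderiv_of_isOpen hΩ (le_of_eq rfl)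
  exact (hG.clm_apply contDiffOn_const).congr fun q hq => slice2_deriv_eq hΩ hF hq

theorem contDiffOn_pd1 (hΩ : IsOpen Ω) (hF : ContDiffOn ℝ ∞ F Ω) :
    ContDiffOn ℝ ∞ (pd1 F) Ω := by
  have hG : ContDiffOn ℝ ∞ (fderiv ℝ F) Ω := hF.fderiv_of_isOpen hΩ (le_of_eq rfl)
  exact (hG.clm_apply contDiffOn_const).congr fun q hq => slice1_deriv_eq hΩ hF hq

theorem pd2_mul (hΩ : IsOpen Ω) (ha : ContDiffOn ℝ ∞ F Ω) (hb : ContDiffOn ℝ ∞ G Ω)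
    (hp : p ∈ Ω) :
    pd2 (fun q => F q * G q) p = pd2 F p * G p + F p * pd2 G p :=
  deriv_mul (slice2_diff hΩ ha hp) (slice2_diff hΩ hb hp)

theorem pd1_mul (hΩ : IsOpen Ω) (ha : ContDiffOn ℝ ∞ F Ω) (hb : ContDiffOn ℝ ∞ G Ω)
    (hp : p ∈ Ω) :
    pd1 (fun q => F q * G q) p = pd1 F p * G p + F p * pd1 G p :=
  deriv_mul (slice1_diff hΩ ha hp) (slice1_diff hΩ hb hp)

theorem pd2_add (hΩ : IsOpen Ω) (ha : ContDiffOn ℝ ∞ F Ω) (hb : ContDiffOn ℝ ∞ G Ω)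
    (hp : p ∈ Ω) :
    pd2 (fun q => F q + G q) p = pd2 F p + pd2 G p :=
  deriv_add (slice2_diff hΩ ha hp) (slice2_diff hΩ hb hp)

theorem pd2_pd1_symm (hΩ : IsOpen Ω) (hF : ContDiffOn ℝ ∞ F Ω) (hp : p ∈ Ω) :
    pd2 (pd1 F) p = pd1 (pd2 F) p := by
  have hG : ContDiffOn ℝ ∞ (fderiv ℝ F) Ω := hF.fderiv_of_isOpen hΩ (le_of_eq rfl)
  have h1 : pd2 (pd1 F) p = pd2 (fun q => fderiv ℝ F q ((1:ℝ), (0:ℝ))) p :=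
    pd2_congr hΩ (fun q hq => slice1_deriv_eq hΩ hF hq) hp
  have h2 : pd1 (pd2 F) p = pd1 (fun q => fderiv ℝ F q ((0:ℝ), (1:ℝ))) p :=
    pd1_congr hΩ (fun q hq => slice2_deriv_eq hΩ hF hq) hp
  have h3 : pd2 (fun q => fderiv ℝ F q ((1:ℝ), (0:ℝ))) p
      = fderiv ℝ (fderiv ℝ F) p ((0:ℝ), (1:ℝ)) ((1:ℝ), (0:ℝ)) := by
    have hc : DifferentiableAt ℝ (fun y : ℝ => fderiv ℝ F (p.1, y)) p.2 :=
      slice2_diff hΩ hG hp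
    have : pd2 (fun q => fderiv ℝ F q ((1:ℝ), (0:ℝ))) p
        = deriv (fun y : ℝ => (fun y : ℝ => fderiv ℝ F (p.1, y)) y ((1:ℝ), (0:ℝ))) p.2 := rfl
    rw [this, deriv_clm_apply hc (differentiableAt_const _)]
    simp [slice2_deriv_eq hΩ hG hp]
  have h4 : pd1 (fun q => fderiv ℝ F q ((0:ℝ), (1:ℝ))) p
      = fderiv ℝ (fderiv ℝ F) p ((1:ℝ), (0:ℝ)) ((0:ℝ), (1:ℝ)) := by
    have hc : DifferentiableAt ℝ (fun x : ℝ => fderiv ℝ F (x, p.2)) p.1 :=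
      slice1_diff hΩ hG hp
    have : pd1 (fun q => fderiv ℝ F q ((0:ℝ), (1:ℝ))) p
        = deriv (fun x : ℝ => (fun x : ℝ => fderiv ℝ F (x, p.2)) x ((0:ℝ), (1:ℝ))) p.1 := rfl
    rw [this, deriv_clm_apply hc (differentiableAt_const _)]
    simp [slice1_deriv_eq hΩ hG hp]
  have hsym : IsSymmSndFDerivAt ℝ F p :=
    (hF.contDiffAt (hΩ.mem_nhds hp)).isSymmSndFDerivAt (by rw [minSmoothness_of_isRCLikeNormedField]; exact two_le_infty)
  rw [h1, h2, h3, h4, hsym]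

end helpers2

/-- A differentiable function vanishing on a right neighborhood has vanishing derivative. -/
theorem deriv_eq_zero_of_right {g : ℝ → ℝ} {x ε : ℝ} (hε : 0 < ε)
    (hd : DifferentiableAt ℝ g x) (h0 : ∀ y, x ≤ y → y < x + ε → g y = 0) :
    deriv g x = 0 := by
  have hu : UniqueDiffWithinAt ℝ (Set.Ici x) x := uniqueDiffOn_Ici x x Set.self_mem_Ici
  have h1 : HasDerivWithinAt g (deriv g x) (Set.Ici x) x := hd.hasDerivAt.hasDerivWithinAt
  have heq : g =ᶠ[nhdsWithin x (Set.Ici x)] fun _ => (0:ℝ) := by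
    have hmem : Set.Ico x (x + ε) ∈ nhdsWithin x (Set.Ici x) := by
      rw [mem_nhdsWithin]
      exact ⟨Set.Iio (x + ε), isOpen_Iio, by simpa using hε, by
        intro y hy; exact ⟨hy.2, hy.1⟩⟩
    filter_upwards [hmem] with y hy
    exact h0 y hy.1 hy.2
  have h2 : HasDerivWithinAt g 0 (Set.Ici x) x := by
    have h3 : HasDerivWithinAt (fun _ => (0:ℝ)) 0 (Set.Ici x) x :=
      (hasDerivAt_const _ _).hasDerivWithinAt
    exact h3.congr_of_eventuallyEq heq (h0 x le_rfl (by linarith))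
  have := h1.derivWithin hu
  have := h2.derivWithin hu
  linarith

/-- Iterated partial derivative of `w` in the second variable, as a function on `ℝ × ℝ`. -/
noncomputable def Wf (w : ℝ → ℝ → ℝ) : ℕ → ℝ × ℝ → ℝ
  | 0 => Function.uncurry w
  | k+1 => pd2 (Wf w k)

theorem Wf_contDiffOn {Ω : Set (ℝ × ℝ)} {w : ℝ → ℝ → ℝ} (hΩ : IsOpen Ω)
    (hw : ContDiffOn ℝ ∞ (Function.uncurry w) Ω) (k : ℕ) :
    ContDiffOn ℝ ∞ (Wf w k) Ω := by
  induction k with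
  | zero => exact hw
  | succ k ih => exact contDiffOn_pd2 hΩ ih

/-- Negligible functions of order `k`: sums of terms which vanish on the segment
`{ν = 0}` once all `Wf w i`, `i ≤ k`, vanish on a neighborhood of the segment. -/
inductive KNeg (Ω : Set (ℝ × ℝ)) (w : ℝ → ℝ → ℝ) : ℕ → (ℝ × ℝ → ℝ) → Prop
  | g1 {k i : ℕ} (a : ℝ × ℝ → ℝ) (ha : ContDiffOn ℝ ∞ a Ω) (hik : i ≤ k) :
      KNeg Ω w k (fun p => a p * Wf w i p)
  | g2 {k i : ℕ} (a : ℝ × ℝ → ℝ) (ha : ContDiffOn ℝ ∞ a Ω) (hik : i ≤ k) :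
      KNeg Ω w k (fun p => a p * pd1 (Wf w i) p)
  | g3 {k i : ℕ} (a : ℝ × ℝ → ℝ) (ha : ContDiffOn ℝ ∞ a Ω) (hik : i ≤ k + 1) :
      KNeg Ω w k (fun p => p.2 * (a p * Wf w i p))
  | g4 {k i : ℕ} (a : ℝ × ℝ → ℝ) (ha : ContDiffOn ℝ ∞ a Ω) (hik : i ≤ k + 1) :
      KNeg Ω w k (fun p => p.2 * (a p * pd1 (Wf w i) p))
  | add {k : ℕ} {F G : ℝ × ℝ → ℝ} : KNeg Ω w k F → KNeg Ω w k G →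
      KNeg Ω w k (fun p => F p + G p)
  | congr {k : ℕ} {F G : ℝ × ℝ → ℝ} : KNeg Ω w k F → (∀ p ∈ Ω, F p = G p) →
      KNeg Ω w k G
  | mono {k k' : ℕ} {F : ℝ × ℝ → ℝ} : KNeg Ω w k F → k ≤ k' → KNeg Ω w k' F

theorem KNeg.contDiffOn {Ω : Set (ℝ × ℝ)} {w : ℝ → ℝ → ℝ} {k : ℕ} {N : ℝ × ℝ → ℝ}
    (hΩ : IsOpen Ω) (hw : ContDiffOn ℝ ∞ (Function.uncurry w) Ω)
    (hN : KNeg Ω w k N) : ContDiffOn ℝ ∞ N Ω := by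
  induction hN with
  | g1 a ha hik => exact ha.mul (Wf_contDiffOn hΩ hw _)
  | g2 a ha hik => exact ha.mul (contDiffOn_pd1 hΩ (Wf_contDiffOn hΩ hw _))
  | g3 a ha hik => exact (contDiff_snd.contDiffOn).mul (ha.mul (Wf_contDiffOn hΩ hw _))
  | g4 a ha hik =>
      exact (contDiff_snd.contDiffOn).mul (ha.mul (contDiffOn_pd1 hΩ (Wf_contDiffOn hΩ hw _)))
  | add hF hG ihF ihG => exact ihF.add ihG
  | congr hF heq ih => exact ih.congr fun p hp => (heq p hp).symm
  | mono hF hkk ih => exact ih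

theorem pd2_snd {p : ℝ × ℝ} : pd2 (fun q : ℝ × ℝ => q.2) p = 1 := by
  show deriv (fun y : ℝ => y) p.2 = 1
  simp

theorem KNeg.pd2_mem {Ω : Set (ℝ × ℝ)} {w : ℝ → ℝ → ℝ} {k : ℕ} {N : ℝ × ℝ → ℝ}
    (hΩ : IsOpen Ω) (hw : ContDiffOn ℝ ∞ (Function.uncurry w) Ω)
    (hN : KNeg Ω w k N) : KNeg Ω w (k+1) (pd2 N) := by
  induction hN with
  | @g1 k i a ha hik =>
      have hWi := Wf_contDiffOn hΩ hw i
      refine (KNeg.add (KNeg.g1 (Ω := Ω) (w := w) (pd2 a) (contDiffOn_pd2 hΩ ha)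
        (hik.trans (Nat.le_succ k))) (KNeg.g1 a ha (Nat.succ_le_succ hik))).congr ?_
      intro p hp
      rw [pd2_mul hΩ ha hWi hp]
      rfl
  | @g2 k i a ha hik =>
      have hWi := Wf_contDiffOn hΩ hw i
      refine (KNeg.add (KNeg.g2 (Ω := Ω) (w := w) (pd2 a) (contDiffOn_pd2 hΩ ha)
        (hik.trans (Nat.le_succ k))) (KNeg.g2 a ha (Nat.succ_le_succ hik))).congr ?_
      intro p hp
      rw [pd2_mul hΩ ha (contDiffOn_pd1 hΩ hWi) hp, pd2_pd1_symm hΩ hWi hp]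
      rfl
  | @g3 k i a ha hik =>
      have hWi := Wf_contDiffOn hΩ hw i
      refine (KNeg.add (KNeg.g1 (Ω := Ω) (w := w) a ha hik)
        (KNeg.add (KNeg.g3 (pd2 a) (contDiffOn_pd2 hΩ ha) (hik.trans (Nat.le_succ _)))
          (KNeg.g3 a ha (Nat.succ_le_succ hik)))).congr ?_
      intro p hp
      rw [pd2_mul hΩ contDiff_snd.contDiffOn (ha.mul hWi) hp, pd2_mul hΩ ha hWi hp, pd2_snd]
      show a p * Wf w i p + (p.2 * (pd2 a p * Wf w i p) + p.2 * (a p * pd2 (Wf w i) p))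
        = 1 * (a p * Wf w i p) + p.2 * (pd2 a p * Wf w i p + a p * pd2 (Wf w i) p)
      ring
  | @g4 k i a ha hik =>
      have hWi := Wf_contDiffOn hΩ hw i
      refine (KNeg.add (KNeg.g2 (Ω := Ω) (w := w) a ha hik)
        (KNeg.add (KNeg.g4 (pd2 a) (contDiffOn_pd2 hΩ ha) (hik.trans (Nat.le_succ _)))
          (KNeg.g4 a ha (Nat.succ_le_succ hik)))).congr ?_
      intro p hp
      rw [pd2_mul hΩ contDiff_snd.contDiffOn (ha.mul (contDiffOn_pd1 hΩ hWi)) hp,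
        pd2_mul hΩ ha (contDiffOn_pd1 hΩ hWi) hp, pd2_pd1_symm hΩ hWi hp, pd2_snd]
      show a p * pd1 (Wf w i) p
          + (p.2 * (pd2 a p * pd1 (Wf w i) p) + p.2 * (a p * pd1 (pd2 (Wf w i)) p))
        = 1 * (a p * pd1 (Wf w i) p)
          + p.2 * (pd2 a p * pd1 (Wf w i) p + a p * pd1 (pd2 (Wf w i)) p)
      ring
  | add hF hG ihF ihG =>
      rename_i k F G
      refine (ihF.add ihG).congr fun p hp => ?_
      exact (pd2_add hΩ (hF.contDiffOn hΩ hw) (hG.contDiffOn hΩ hw) hp).symm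
  | congr hF heq ih =>
      exact ih.congr fun p hp => pd2_congr hΩ heq hp
  | mono hF hkk ih => exact ih.mono (Nat.succ_le_succ hkk)

theorem KNeg.eval {Ω : Set (ℝ × ℝ)} {w : ℝ → ℝ → ℝ} {k : ℕ} {N : ℝ × ℝ → ℝ} {c₀ : ℝ}
    (hN : KNeg Ω w k N) {μ : ℝ} (hμ : μ ∈ Set.Ioo 0 c₀) (hmem : ((μ, 0) : ℝ × ℝ) ∈ Ω)
    (hvan : ∀ i ≤ k, ∀ x ∈ Set.Icc 0 c₀, Wf w i (x, 0) = 0) :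
    N (μ, 0) = 0 := by
  induction hN with
  | @g1 k i a ha hik =>
      show a (μ,0) * Wf w i (μ,0) = 0
      rw [hvan i hik μ (Set.mem_Icc.2 ⟨hμ.1.le, hμ.2.le⟩), mul_zero]
  | @g2 k i a ha hik =>
      have h1 : pd1 (Wf w i) (μ, 0) = 0 := by
        have heq : (fun x => Wf w i (x, (0:ℝ))) =ᶠ[nhds μ] fun _ => (0:ℝ) := by
          filter_upwards [isOpen_Ioo.mem_nhds hμ] with x hx
          exact hvan i hik x ⟨hx.1.le, hx.2.le⟩
        show deriv (fun x => Wf w i (x, (0:ℝ))) μ = 0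
        rw [heq.deriv_eq, deriv_const]
      show a (μ,0) * pd1 (Wf w i) (μ,0) = 0
      rw [h1, mul_zero]
  | @g3 k i a ha hik => show (0:ℝ) * _ = 0; rw [zero_mul]
  | @g4 k i a ha hik => show (0:ℝ) * _ = 0; rw [zero_mul]
  | add hF hG ihF ihG =>
      show _ + _ = (0:ℝ)
      rw [ihF (fun i hi => hvan i hi), ihG (fun i hi => hvan i hi), add_zero]
  | congr hF heq ih => rw [← heq _ hmem]; exact ih hvan
  | mono hF hkk ih => exact ih fun i hi => hvan i (hi.trans hkk)

/-- Key step in the proof of Theorem 5.1: a smooth solution of the λ-mode Kruskal wave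
equation vanishing on the horizon segments `{ν = 0, 0 ≤ μ ≤ c₀}` and
`{μ = 0, 0 ≤ ν < δ₁}` vanishes to infinite order at `{ν = 0, 0 ≤ μ ≤ c₀}`. -/
theorem infinite_order_vanishing_at_horizon
    (M lam c₀ δ₁ δ : ℝ) (hM : 0 < M) (hlam : 0 ≤ lam)
    (hc₀ : 0 < c₀) (hδ₁ : 0 < δ₁) (hδ : 0 < δ)
    (R : ℝ → ℝ) (hR : IsKruskalRadius M δ (c₀^2 + δ) R)
    (Ω : Set (ℝ × ℝ)) (hΩopen : IsOpen Ω)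
    (hΩsub : Set.Icc (0:ℝ) c₀ ×ˢ Set.Ico (0:ℝ) δ₁ ⊆ Ω)
    (hΩprod : ∀ p ∈ Ω, p.1 * p.2 ∈ Set.Ioo (-δ) (c₀^2 + δ))
    (w : ℝ → ℝ → ℝ) (hw : ContDiffOn ℝ ∞ (Function.uncurry w) Ω)
    (heq : ∀ p ∈ Ω, 0 ≤ p.1 → 0 ≤ p.2 → KruskalEqAt M lam R w p.1 p.2)
    (hw1 : ∀ μ ∈ Set.Icc (0:ℝ) c₀, w μ 0 = 0)
    (hw2 : ∀ ν ∈ Set.Ico (0:ℝ) δ₁, w 0 ν = 0) :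
    ∀ k : ℕ, ∀ μ ∈ Set.Icc (0:ℝ) c₀, iteratedDeriv k (fun ν => w μ ν) 0 = 0 := by
  obtain ⟨hR1, hR2⟩ := hR
  have hmemΩ : ∀ μ ∈ Set.Icc (0:ℝ) c₀, ((μ, 0) : ℝ × ℝ) ∈ Ω := fun μ hμ =>
    hΩsub ⟨hμ, ⟨le_rfl, hδ₁⟩⟩
  have hmemΩ2 : ∀ ν ∈ Set.Ico (0:ℝ) δ₁, ((0, ν) : ℝ × ℝ) ∈ Ω := fun ν hν =>
    hΩsub ⟨⟨le_rfl, hc₀.le⟩, hν⟩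
  have hWs : ∀ k, ContDiffOn ℝ ∞ (Wf w k) Ω := Wf_contDiffOn hΩopen hw
  have hms : ContDiffOn ℝ ∞ (fun p : ℝ × ℝ => p.1 * p.2) Ω :=
    (contDiff_fst.mul contDiff_snd).contDiffOn
  have hRm : ContDiffOn ℝ ∞ (fun p : ℝ × ℝ => R (p.1 * p.2)) Ω := hR1.comp hms hΩprod
  set A : ℝ × ℝ → ℝ := fun p => (R (p.1 * p.2))^2 with hAdef
  have hA : ContDiffOn ℝ ∞ A Ω := hRm.pow 2
  have hRpos : ∀ p ∈ Ω, 0 < R (p.1 * p.2) := fun p hp => (hR2 _ (hΩprod p hp)).1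
  set Vt : ℝ × ℝ → ℝ :=
    fun p => 8*M^2*lam^2 / (R (p.1*p.2) * Real.exp (R (p.1*p.2)/(2*M))) with hVtdef
  have hVt : ContDiffOn ℝ ∞ Vt Ω := by
    apply contDiffOn_const.div (hRm.mul ((hRm.div_const _).exp))
    exact fun p hp => ne_of_gt (mul_pos (hRpos p hp) (Real.exp_pos _))
  set B : ℝ × ℝ → ℝ := fun p => 2 * R (p.1*p.2) * deriv R (p.1*p.2) with hBdef
  have hB : ContDiffOn ℝ ∞ B Ω :=
    (contDiffOn_const.mul hRm).mul
      ((hR1.deriv_of_isOpen isOpen_Ioo (le_of_eq rfl)).comp hms hΩprod)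
  have pd1A : ∀ p ∈ Ω, pd1 A p = p.2 * B p := by
    intro p hp
    have hx₀ := hΩprod p hp
    have hRd : HasDerivAt R (deriv R (p.1 * p.2)) (p.1 * p.2) :=
      ((hR1.contDiffAt (isOpen_Ioo.mem_nhds hx₀)).differentiableAt (by norm_num)).hasDerivAt
    have h1 : HasDerivAt (fun x : ℝ => x * p.2) p.2 p.1 := hasDerivAt_mul_const p.2
    have h2 : HasDerivAt (fun x : ℝ => R (x * p.2)) (deriv R (p.1 * p.2) * p.2) p.1 :=
      hRd.comp p.1 h1
    have h3 := h2.fun_pow 2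
    have h4 : pd1 A p = deriv (fun x : ℝ => (R (x * p.2))^2) p.1 := rfl
    rw [h4, h3.deriv]
    simp [hBdef]
    ring
  -- the PDE combination as a function on ℝ × ℝ
  set Tf : ℝ × ℝ → ℝ := fun p =>
    pd2 (fun q => A q * pd1 (Wf w 0) q) p + pd1 (fun q => A q * Wf w 1 q) p
      - Vt p * Wf w 0 p with hTfdef
  have hTf0 : ∀ p ∈ Ω, 0 ≤ p.1 → 0 ≤ p.2 → Tf p = 0 := by
    intro p hp h1 h2
    have h := heq p hp h1 h2
    unfold KruskalEqAt at h
    show pd2 (fun q => A q * pd1 (Wf w 0) q) p + pd1 (fun q => A q * Wf w 1 q) p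
      - Vt p * Wf w 0 p = 0
    rw [sub_eq_zero]
    exact h
  have hTfs : ContDiffOn ℝ ∞ Tf Ω :=
    ((contDiffOn_pd2 hΩopen (hA.mul (contDiffOn_pd1 hΩopen (hWs 0)))).add
      (contDiffOn_pd1 hΩopen (hA.mul (hWs 1)))).sub (hVt.mul (hWs 0))
  set N₀ : ℝ × ℝ → ℝ := fun p =>
    pd2 A p * pd1 (Wf w 0) p + (p.2 * (B p * Wf w 1 p) + (-Vt p) * Wf w 0 p) with hN₀def
  have hexp : ∀ p ∈ Ω, Tf p = 2 * A p * pd1 (Wf w 1) p + N₀ p := by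
    intro p hp
    have e1 : pd2 (fun q => A q * pd1 (Wf w 0) q) p
        = pd2 A p * pd1 (Wf w 0) p + A p * pd1 (Wf w 1) p := by
      rw [pd2_mul hΩopen hA (contDiffOn_pd1 hΩopen (hWs 0)) hp,
        pd2_pd1_symm hΩopen (hWs 0) hp]
      rfl
    have e2 : pd1 (fun q => A q * Wf w 1 q) p
        = p.2 * B p * Wf w 1 p + A p * pd1 (Wf w 1) p := by
      rw [pd1_mul hΩopen hA (hWs 1) hp, pd1A p hp]
    show pd2 (fun q => A q * pd1 (Wf w 0) q) p + pd1 (fun q => A q * Wf w 1 q) p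
      - Vt p * Wf w 0 p = 2 * A p * pd1 (Wf w 1) p + N₀ p
    rw [e1, e2]
    show _ = 2 * A p * pd1 (Wf w 1) p
      + (pd2 A p * pd1 (Wf w 0) p + (p.2 * (B p * Wf w 1 p) + (-Vt p) * Wf w 0 p))
    ring
  have hN₀ : KNeg Ω w 0 N₀ :=
    (KNeg.g2 (pd2 A) (contDiffOn_pd2 hΩopen hA) le_rfl).add
      ((KNeg.g3 B hB le_rfl).add (KNeg.g1 (fun p => -Vt p) hVt.neg le_rfl))
  set T : ℕ → ℝ × ℝ → ℝ := fun k => pd2^[k] Tf with hTdef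
  have hTsucc : ∀ k, T (k+1) = pd2 (T k) := fun k => Function.iterate_succ_apply' pd2 k Tf
  have hTs : ∀ k, ContDiffOn ℝ ∞ (T k) Ω := by
    intro k; induction k with
    | zero => exact hTfs
    | succ k ih => rw [hTsucc]; exact contDiffOn_pd2 hΩopen ih
  have hTzero : ∀ k, ∀ p ∈ Ω, 0 ≤ p.1 → 0 ≤ p.2 → T k p = 0 := by
    intro k; induction k with
    | zero => exact hTf0
    | succ k ih =>
      intro p hp h1 h2
      rw [hTsucc]
      obtain ⟨ε, hε, hball⟩ := Metric.isOpen_iff.1 hΩopen p hp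
      apply deriv_eq_zero_of_right hε (slice2_diff hΩopen (hTs k) hp)
      intro y hy1 hy2
      have hmem : ((p.1, y) : ℝ × ℝ) ∈ Ω := by
        apply hball
        simp only [Metric.mem_ball, Prod.dist_eq, Real.dist_eq]
        rw [sub_self, abs_zero]
        exact max_lt hε (by rw [abs_of_nonneg (by linarith)]; linarith)
      exact ih (p.1, y) hmem h1 (le_trans h2 hy1)
  have hMain : ∀ k, ∃ N, KNeg Ω w k N ∧
      ∀ p ∈ Ω, T k p = 2 * A p * pd1 (Wf w (k+1)) p + N p := by
    intro k; induction k with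
    | zero => exact ⟨N₀, hN₀, hexp⟩
    | succ k ih =>
      obtain ⟨N, hN, hNe⟩ := ih
      have hC : ContDiffOn ℝ ∞ (fun q => 2 * A q) Ω := contDiffOn_const.mul hA
      refine ⟨fun p => pd2 (fun q => 2 * A q) p * pd1 (Wf w (k+1)) p + pd2 N p,
        (KNeg.g2 _ (contDiffOn_pd2 hΩopen hC) le_rfl).add (hN.pd2_mem hΩopen hw), ?_⟩
      intro p hp
      rw [hTsucc]
      have h1 : pd2 (T k) p
          = pd2 (fun q => (2 * A q) * pd1 (Wf w (k+1)) q + N q) p :=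
        pd2_congr hΩopen (fun q hq => by rw [hNe q hq]) hp
      have h2 : pd2 (fun q => (2 * A q) * pd1 (Wf w (k+1)) q + N q) p
          = pd2 (fun q => (2 * A q) * pd1 (Wf w (k+1)) q) p + pd2 N p :=
        pd2_add hΩopen (hC.mul (contDiffOn_pd1 hΩopen (hWs (k+1)))) (hN.contDiffOn hΩopen hw) hp
      have h3 : pd2 (fun q => (2 * A q) * pd1 (Wf w (k+1)) q) p
          = pd2 (fun q => 2 * A q) p * pd1 (Wf w (k+1)) p + (2 * A p) * pd1 (Wf w (k+2)) p := by
        rw [pd2_mul hΩopen hC (contDiffOn_pd1 hΩopen (hWs (k+1))) hp,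
          pd2_pd1_symm hΩopen (hWs (k+1)) hp]
        rfl
      rw [h1, h2, h3]
      ring
  have hcol : ∀ i, ∀ ν ∈ Set.Ico (0:ℝ) δ₁, Wf w i (0, ν) = 0 := by
    intro i; induction i with
    | zero => exact fun ν hν => hw2 ν hν
    | succ i ih =>
      intro ν hν
      show pd2 (Wf w i) (0, ν) = 0
      apply deriv_eq_zero_of_right (ε := δ₁ - ν) (by linarith [hν.2])
        (slice2_diff hΩopen (hWs i) (hmemΩ2 ν hν))
      intro y hy1 hy2
      exact ih y ⟨le_trans hν.1 hy1, by linarith⟩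
  have key : ∀ k, ∀ i ≤ k, ∀ μ ∈ Set.Icc (0:ℝ) c₀, Wf w i (μ, 0) = 0 := by
    intro k; induction k with
    | zero =>
      intro i hi μ hμ
      obtain rfl := Nat.le_zero.1 hi
      exact hw1 μ hμ
    | succ k ih =>
      intro i hi μ hμ
      rcases Nat.lt_succ_iff_lt_or_eq.1 (Nat.lt_succ_of_le hi) with h | rfl
      · exact ih i (Nat.lt_succ_iff.1 h) μ hμ
      · -- the inductive step `i = k+1`
        have hA0 : (0:ℝ) ∈ Set.Ioo (-δ) (c₀^2+δ) := ⟨by linarith, by positivity⟩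
        have hR0 : 0 < R 0 := (hR2 0 hA0).1
        have hpd : ∀ x ∈ Set.Ioo (0:ℝ) c₀,
            deriv (fun x' => Wf w (k+1) (x', (0:ℝ))) x = 0 := by
          intro x hx
          obtain ⟨N, hN, hNe⟩ := hMain k
          have hmem : ((x, (0:ℝ)) : ℝ × ℝ) ∈ Ω := hmemΩ x ⟨hx.1.le, hx.2.le⟩
          have h0 : T k (x, 0) = 0 := hTzero k (x, 0) hmem hx.1.le le_rfl
          have h1 : N (x, 0) = 0 := hN.eval hx hmem ih
          have h2 := hNe (x, 0) hmem
          rw [h0, h1, add_zero] at h2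
          rcases mul_eq_zero.1 h2.symm with hbad | hgood
          · exfalso
            have hAv : A ((x, (0:ℝ)) : ℝ × ℝ) = (R 0)^2 := by
              show (R (x*0))^2 = _
              rw [mul_zero]
            rw [hAv] at hbad
            nlinarith [sq_nonneg (R 0)]
          · exact hgood
        set φ : ℝ → ℝ := fun x => Wf w (k+1) (x, (0:ℝ)) with hφdef
        have hφd : ∀ x ∈ Set.Icc (0:ℝ) c₀, DifferentiableAt ℝ φ x := fun x hx =>
          slice1_diff hΩopen (hWs (k+1)) (hmemΩ x hx)
        have hφ0 : φ 0 = 0 := hcol (k+1) 0 ⟨le_rfl, hδ₁⟩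
        rcases eq_or_lt_of_le hμ.1 with hz | hpos
        · exact hz ▸ hφ0
        · have hconst : ∀ a ∈ Set.Ioo (0:ℝ) μ, φ μ = φ a := by
            intro a ha
            have hlt : a < μ := ha.2
            have hdiff : DifferentiableOn ℝ φ (Set.Icc a μ) := fun x hx =>
              (hφd x ⟨le_trans ha.1.le hx.1, le_trans hx.2 hμ.2⟩).differentiableWithinAt
            have hderiv : ∀ x ∈ Set.Ico a μ, derivWithin φ (Set.Icc a μ) x = 0 := by
              intro x hx
              rw [(hφd x ⟨le_trans ha.1.le hx.1, le_trans hx.2.le hμ.2⟩).derivWithin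
                (uniqueDiffOn_Icc hlt x ⟨hx.1, hx.2.le⟩)]
              exact hpd x ⟨lt_of_lt_of_le ha.1 hx.1, lt_of_lt_of_le hx.2 hμ.2⟩
            exact constant_of_derivWithin_zero hdiff hderiv μ ⟨hlt.le, le_rfl⟩
          have hcont : Filter.Tendsto φ (nhdsWithin 0 (Set.Ioi 0)) (nhds (φ 0)) :=
            tendsto_nhdsWithin_of_tendsto_nhds
              (slice1_contDiffAt hΩopen (hWs (k+1)) (hmemΩ 0 ⟨le_rfl, hc₀.le⟩)).continuousAt
          have hconst' : Filter.Tendsto φ (nhdsWithin 0 (Set.Ioi 0)) (nhds (φ μ)) := by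
            refine Filter.Tendsto.congr' ?_ tendsto_const_nhds
            filter_upwards [Ioo_mem_nhdsGT_of_mem (Set.mem_Ico.2 ⟨le_rfl, hpos⟩)] with a ha
            exact hconst a ha
          exact (tendsto_nhds_unique hconst' hcont).trans hφ0
  intro k μ hμ
  have hiter : ∀ k ν, ((μ, ν) : ℝ × ℝ) ∈ Ω →
      iteratedDeriv k (fun y => w μ y) ν = Wf w k (μ, ν) := by
    intro k; induction k with
    | zero => intro ν _; rfl
    | succ k ih =>
      intro ν hν
      rw [iteratedDeriv_succ]
      have hopen : {y : ℝ | ((μ, y) : ℝ × ℝ) ∈ Ω} ∈ nhds ν :=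
        (continuous_const.prodMk continuous_id).continuousAt.preimage_mem_nhds
          (hΩopen.mem_nhds hν)
      have heq2 : (iteratedDeriv k fun y => w μ y) =ᶠ[nhds ν] fun y => Wf w k (μ, y) := by
        filter_upwards [hopen] with y hy
        exact ih y hy
      rw [heq2.deriv_eq]
      rfl
  rw [hiter k 0 (hmemΩ μ hμ)]
  exact key k k le_rfl μ hμ
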